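/- Let ε ∈ (0, 1/2] and let q ∈ ℝ satisfy (gaussianReal 0 1)(Iic q) = 1 − ε, where Iic(t) = {x : x ≤ t}. Then q ≤ ((1−ε)/(e·ε))^{1/1.95}, where e = exp(1). That is, the (1−ε)-quantile of the standard Gaussian distribution is at most the paper's unimodal safety factor at level ε. -/

import Mathlib

open MeasureTheory ProbabilityTheory Real Set Filter

/-! ### Auxiliary definitions and lemmas -/

/-- The standard Gaussian density. -/
noncomputable def stdGaussPhi (x : ℝ) : ℝ := gaussianPDFReal 0 1 x

lemma stdGaussPhi_def (x : ℝ) :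
    stdGaussPhi x = (Real.sqrt (2 * π))⁻¹ * Real.exp (-x ^ 2 / 2) := by
  simp [stdGaussPhi, gaussianPDFReal]

lemma stdGaussPhi_pos (x : ℝ) : 0 < stdGaussPhi x := gaussianPDFReal_pos 0 1 x one_ne_zero

lemma stdGaussPhi_integrable : Integrable stdGaussPhi := integrable_gaussianPDFReal 0 1

lemma stdGauss_Iic (t : ℝ) :
    gaussianReal 0 1 (Set.Iic t) = ENNReal.ofReal (∫ x in Iic t, stdGaussPhi x) :=
  gaussianReal_apply_eq_integral 0 one_ne_zero _

lemma stdGaussPhi_total : ∫ x, stdGaussPhi x = 1 := integral_gaussianPDFReal_eq_one 0 one_ne_zero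

lemma stdGaussPhi_even (x : ℝ) : stdGaussPhi (-x) = stdGaussPhi x := by
  simp [stdGaussPhi_def, neg_pow]

lemma stdGaussPhi_split (t : ℝ) :
    (∫ x in Iic t, stdGaussPhi x) + ∫ x in Ioi t, stdGaussPhi x = 1 := by
  rw [← stdGaussPhi_total, ← setIntegral_union (Iic_disjoint_Ioi le_rfl) measurableSet_Ioi
    stdGaussPhi_integrable.integrableOn stdGaussPhi_integrable.integrableOn, Iic_union_Ioi,
    MeasureTheory.setIntegral_univ]

lemma stdGaussPhi_half : ∫ x in Iic (0:ℝ), stdGaussPhi x = 1 / 2 := by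
  have h1 : (∫ x in Iic (0:ℝ), stdGaussPhi x) = ∫ x in Ioi (0:ℝ), stdGaussPhi x := by
    have := integral_comp_neg_Iic (0:ℝ) stdGaussPhi
    simp only [neg_zero] at this
    rw [← this]
    exact setIntegral_congr_fun measurableSet_Iic fun x _ => (stdGaussPhi_even x).symm
  have h2 := stdGaussPhi_split 0
  linarith

lemma stdGauss_integral_x_exp (r : ℝ) :
    ∫ x in Ioi r, x * Real.exp (-x ^ 2 / 2) = Real.exp (-r ^ 2 / 2) := by
  have hderiv : ∀ x ∈ Ici r, HasDerivAt (fun y : ℝ => -Real.exp (-y ^ 2 / 2))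
      (x * Real.exp (-x ^ 2 / 2)) x := by
    intro x _
    have h1 : HasDerivAt (fun y : ℝ => -y ^ 2 / 2) (-x) x := by
      have := (hasDerivAt_pow 2 x).neg.div_const 2
      exact this.congr_deriv (by norm_num; ring)
    have := (h1.exp).neg
    exact this.congr_deriv (by ring)
  have hint : IntegrableOn (fun x => x * Real.exp (-x ^ 2 / 2)) (Ioi r) := by
    have := integrable_mul_exp_neg_mul_sq (b := (1/2 : ℝ)) (by norm_num)
    have h2 : (fun x : ℝ => x * Real.exp (-x ^ 2 / 2))
        = fun x : ℝ => x * Real.exp (-(1/2) * x ^ 2) := by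
      ext x; ring_nf
    rw [h2]
    exact this.integrableOn
  have htend : Tendsto (fun y : ℝ => -Real.exp (-y ^ 2 / 2)) atTop (nhds 0) := by
    rw [show (0:ℝ) = -0 by norm_num]
    apply Filter.Tendsto.neg
    apply Real.tendsto_exp_atBot.comp
    apply Filter.Tendsto.atBot_div_const (by norm_num)
    exact tendsto_neg_atBot_iff.mpr (tendsto_pow_atTop two_ne_zero)
  have := MeasureTheory.integral_Ioi_of_hasDerivAt_of_tendsto
    (Continuous.continuousWithinAt (by continuity)) (fun x hx => hderiv x (Ioi_subset_Ici_self hx)) hint htend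
  rw [this]; ring

lemma stdGauss_xexp_integrableOn (r : ℝ) :
    IntegrableOn (fun x => x * Real.exp (-x ^ 2 / 2)) (Ioi r) := by
  have := integrable_mul_exp_neg_mul_sq (b := (1/2 : ℝ)) (by norm_num)
  have h2 : (fun x : ℝ => x * Real.exp (-x ^ 2 / 2))
      = fun x : ℝ => x * Real.exp (-(1/2) * x ^ 2) := by
    ext x; ring_nf
  rw [h2]; exact this.integrableOn

lemma stdGauss_tail_le {r : ℝ} (hr : 0 < r) :
    (∫ x in Ioi r, stdGaussPhi x) ≤ stdGaussPhi r / r := by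
  have hg : IntegrableOn
      (fun x => (Real.sqrt (2 * π))⁻¹ / r * (x * Real.exp (-x ^ 2 / 2))) (Ioi r) :=
    (stdGauss_xexp_integrableOn r).const_mul _
  have h1 : ∀ x ∈ Ioi r,
      stdGaussPhi x ≤ (Real.sqrt (2 * π))⁻¹ / r * (x * Real.exp (-x ^ 2 / 2)) := by
    intro x hx
    rw [stdGaussPhi_def]
    have hx' : r ≤ x := le_of_lt hx
    have hs : (0:ℝ) < (Real.sqrt (2 * π))⁻¹ := by positivity
    have he : (0:ℝ) < Real.exp (-x ^ 2 / 2) := Real.exp_pos _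
    rw [div_mul_eq_mul_div, le_div_iff₀ hr]
    nlinarith [mul_pos hs he]
  have h2 := setIntegral_mono_on stdGaussPhi_integrable.integrableOn hg measurableSet_Ioi h1
  calc (∫ x in Ioi r, stdGaussPhi x)
      ≤ ∫ x in Ioi r, (Real.sqrt (2 * π))⁻¹ / r * (x * Real.exp (-x ^ 2 / 2)) := h2
    _ = (Real.sqrt (2 * π))⁻¹ / r * ∫ x in Ioi r, x * Real.exp (-x ^ 2 / 2) :=
        integral_const_mul _ _
    _ = stdGaussPhi r / r := by rw [stdGauss_integral_x_exp, stdGaussPhi_def]; ring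

lemma stdGauss_mid_ge {r : ℝ} (h0 : 0 ≤ r) :
    1 / 2 + r * stdGaussPhi r ≤ ∫ x in Iic r, stdGaussPhi x := by
  have hu : Iic (0:ℝ) ∪ Ioc 0 r = Iic r := Iic_union_Ioc_eq_Iic h0
  have hsplit : (∫ x in Iic r, stdGaussPhi x)
      = (∫ x in Iic (0:ℝ), stdGaussPhi x) + ∫ x in Ioc (0:ℝ) r, stdGaussPhi x := by
    rw [← hu, setIntegral_union (Iic_disjoint_Ioc le_rfl) measurableSet_Ioc
      stdGaussPhi_integrable.integrableOn stdGaussPhi_integrable.integrableOn]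
  have hconst : ∀ x ∈ Ioc (0:ℝ) r, stdGaussPhi r ≤ stdGaussPhi x := by
    intro x hx
    rw [stdGaussPhi_def, stdGaussPhi_def]
    have : -r ^ 2 / 2 ≤ -x ^ 2 / 2 := by nlinarith [hx.1, hx.2]
    have := Real.exp_le_exp.mpr this
    have hs : (0:ℝ) ≤ (Real.sqrt (2 * π))⁻¹ := by positivity
    nlinarith
  have h2 := setIntegral_mono_on (integrableOn_const measure_Ioc_lt_top.ne)
    stdGaussPhi_integrable.integrableOn measurableSet_Ioc hconst
  rw [setIntegral_const, measureReal_def, Real.volume_Ioc, ENNReal.toReal_ofReal (by linarith)] at h2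
  simp only [smul_eq_mul, sub_zero] at h2
  linarith [hsplit, stdGaussPhi_half, h2]

/-! ### Elementary numeric estimates -/

lemma stdGauss_exp_upper (c : ℝ) (n : ℕ) (hn0 : 0 < n) (h1 : c / n < 1) :
    Real.exp c ≤ ((1 - c / n)⁻¹) ^ n := by
  have hn : 0 < (1 : ℝ) - c / n := by linarith
  have h4 : Real.exp (c / n) * (1 - c / n) ≤ 1 := by
    have h2 := Real.one_sub_le_exp_neg (c / n)
    calc Real.exp (c/n) * (1 - c/n) ≤ Real.exp (c/n) * Real.exp (-(c/n)) := by
          nlinarith [Real.exp_pos (c/n)]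
      _ = 1 := by rw [← Real.exp_add]; simp
  have hb : Real.exp (c / n) ≤ (1 - c / n)⁻¹ := by
    nlinarith [inv_pos.mpr hn, inv_mul_cancel₀ hn.ne', Real.exp_pos (c/n)]
  calc Real.exp c = (Real.exp (c / n)) ^ n := by
        rw [← Real.exp_nat_mul]; congr 1; field_simp
    _ ≤ ((1 - c / n)⁻¹) ^ n := pow_le_pow_left₀ (Real.exp_pos _).le hb n

lemma stdGauss_F1 : Real.exp (20/39 : ℝ) ≤ 100/59 := by
  have := stdGauss_exp_upper (20/39) 16 (by norm_num) (by push_cast; norm_num)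
  refine this.trans ?_
  push_cast
  norm_num

lemma stdGauss_F2 : Real.exp (909/1000 : ℝ) ≤ 2.506 := by
  have := stdGauss_exp_upper (909/1000) 64 (by norm_num) (by push_cast; norm_num)
  refine this.trans ?_
  push_cast
  norm_num

lemma stdGauss_F3 : Real.exp (48/1000 : ℝ) ≤ 20/19 := by
  have := stdGauss_exp_upper (48/1000) 4 (by norm_num) (by push_cast; norm_num)
  refine this.trans ?_
  push_cast
  norm_num

lemma stdGauss_F4 : (25/17 : ℝ) ≤ Real.exp (386/1000) := by
  have h := Real.sum_le_exp_of_nonneg (x := 386/1000) (by norm_num) 5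
  refine le_trans ?_ h
  norm_num [Finset.sum_range_succ, Nat.factorial]

lemma stdGauss_sqrt2pi_lb : (2.506 : ℝ) ≤ Real.sqrt (2 * π) := by
  have h : (2.506 : ℝ)^2 ≤ 2 * π := by nlinarith [Real.pi_gt_d6]
  nlinarith [Real.sq_sqrt (by positivity : (0:ℝ) ≤ 2 * π),
    Real.sqrt_nonneg (2 * π)]

lemma stdGauss_sqrt2pi_ub : Real.sqrt (2 * π) ≤ 2.5067 := by
  have h : 2 * π ≤ (2.5067 : ℝ)^2 := by nlinarith [Real.pi_lt_d6]
  nlinarith [Real.sq_sqrt (by positivity : (0:ℝ) ≤ 2 * π),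
    Real.sqrt_nonneg (2 * π), Real.sqrt_pos.mpr (by positivity : (0:ℝ) < 2 * π)]

lemma stdGauss_log_sqrt2pi : (909/1000 : ℝ) ≤ Real.log (Real.sqrt (2 * π)) := by
  rw [Real.le_log_iff_exp_le (by positivity)]
  exact stdGauss_F2.trans stdGauss_sqrt2pi_lb

lemma stdGauss_log_2019 : (48/1000 : ℝ) ≤ Real.log (20/19) := by
  rw [Real.le_log_iff_exp_le (by norm_num)]
  exact stdGauss_F3

lemma stdGauss_log_068 {y : ℝ} (hy : (68/100 : ℝ) ≤ y) : (-(386/1000) : ℝ) ≤ Real.log y := by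
  rw [Real.le_log_iff_exp_le (by linarith)]
  rw [Real.exp_neg]
  have h5 : (Real.exp (386/1000))⁻¹ ≤ (25/17 : ℝ)⁻¹ := inv_anti₀ (by norm_num) stdGauss_F4
  refine h5.trans ?_
  norm_num
  linarith

lemma stdGauss_regimeA {ε R : ℝ} (hε0 : 0 < ε) (hεle : ε ≤ 32/100) (hR : 0 < R)
    (hlog : Real.log ε = Real.log (1 - ε) - 1 - (39/20) * Real.log R) :
    Real.exp (-R^2/2) ≤ ε * R * Real.sqrt (2*π) := by
  have hR2 : (0:ℝ) < (20/19) * R^2 := by positivity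
  have hlogR2 : 2 * Real.log R ≤ 20*R^2/19 - 1 - (48/1000) := by
    have h1 := Real.log_le_sub_one_of_pos hR2
    have h2 : Real.log ((20/19) * R^2) = Real.log (20/19) + 2 * Real.log R := by
      rw [Real.log_mul (by norm_num) (by positivity), Real.log_pow]
      push_cast; ring
    have h3 := stdGauss_log_2019
    nlinarith
  have hlog1ε : (-(386/1000) : ℝ) ≤ Real.log (1 - ε) := stdGauss_log_068 (by linarith)
  have hsq : (0:ℝ) < Real.sqrt (2 * π) := by positivity
  have key : -R^2/2 ≤ Real.log ε + Real.log R + Real.log (Real.sqrt (2*π)) := by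
    have := stdGauss_log_sqrt2pi
    rw [hlog]
    nlinarith
  calc Real.exp (-R^2/2)
      ≤ Real.exp (Real.log ε + Real.log R + Real.log (Real.sqrt (2*π))) :=
        Real.exp_le_exp.mpr key
    _ = ε * R * Real.sqrt (2*π) := by
        rw [Real.exp_add, Real.exp_add, Real.exp_log hε0, Real.exp_log hR, Real.exp_log hsq]

lemma stdGauss_regimeB_poly {R : ℝ} (h1 : (59/100 : ℝ) ≤ R) (h2 : R ≤ 1) :
    (4513/10000 : ℝ) ≤ R * (1 - R^2/4)^2 := by
  nlinarith [sq_nonneg (R - 1), sq_nonneg (R - 59/100),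
    mul_nonneg (sub_nonneg.mpr h1) (sub_nonneg.mpr h2), sq_nonneg (R - 9/10), sq_nonneg R]

lemma stdGauss_regimeB {R : ℝ} (h1 : (59/100:ℝ) ≤ R) (h2 : R ≤ 1) :
    (18/100 : ℝ) * Real.sqrt (2*π) ≤ R * Real.exp (-R^2/2) := by
  have hu : (0:ℝ) ≤ R^2/4 := by positivity
  have hq : R^2/4 ≤ 1/4 := by nlinarith
  have hb : (1 - R^2/4) ≤ Real.exp (-(R^2/4)) := Real.one_sub_le_exp_neg _
  have hbn : (0:ℝ) ≤ 1 - R^2/4 := by linarith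
  have hsq : (1 - R^2/4)^2 ≤ Real.exp (-R^2/2) := by
    have : Real.exp (-(R^2/4)) ^ 2 = Real.exp (-R^2/2) := by
      rw [← Real.exp_nat_mul]; congr 1; ring
    nlinarith [Real.exp_pos (-(R^2/4))]
  have hp := stdGauss_regimeB_poly h1 h2
  have hs := stdGauss_sqrt2pi_ub
  have hsn : (0:ℝ) ≤ Real.sqrt (2*π) := Real.sqrt_nonneg _
  nlinarith

lemma stdGauss_R_lower {ε : ℝ} (h1 : (32/100:ℝ) ≤ ε) (h2 : ε ≤ 1/2) :
    (59/100 : ℝ) ≤ ((1 - ε) / (Real.exp 1 * ε)) ^ ((1:ℝ)/1.95) := by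
  have hε0 : (0:ℝ) < ε := by linarith
  have hB : Real.exp (-1) ≤ (1 - ε) / (Real.exp 1 * ε) := by
    rw [Real.exp_neg, le_div_iff₀ (by positivity)]
    have h3 : ε ≤ 1 - ε := by linarith
    calc (Real.exp 1)⁻¹ * (Real.exp 1 * ε) = ε := by field_simp
      _ ≤ 1 - ε := h3
  have hmono := Real.rpow_le_rpow (Real.exp_pos (-1)).le hB (by norm_num : (0:ℝ) ≤ (1:ℝ)/1.95)
  have heq : (Real.exp (-1) : ℝ) ^ ((1:ℝ)/1.95) = Real.exp (-(20/39)) := by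
    rw [Real.rpow_def_of_pos (Real.exp_pos _), Real.log_exp]
    norm_num
  have hlb : (59/100 : ℝ) ≤ Real.exp (-(20/39)) := by
    rw [Real.exp_neg]
    have h3 : (100/59 : ℝ)⁻¹ ≤ (Real.exp (20/39))⁻¹ := inv_anti₀ (Real.exp_pos _) stdGauss_F1
    calc (59/100:ℝ) = ((100:ℝ)/59)⁻¹ := by norm_num
      _ ≤ _ := h3
  calc (59/100:ℝ) ≤ Real.exp (-(20/39)) := hlb
    _ = (Real.exp (-1) : ℝ) ^ ((1:ℝ)/1.95) := heq.symm
    _ ≤ _ := hmono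

lemma stdGauss_R_upper {ε : ℝ} (h1 : (32/100:ℝ) ≤ ε) (h2 : ε ≤ 1/2) :
    ((1 - ε) / (Real.exp 1 * ε)) ^ ((1:ℝ)/1.95) ≤ 1 := by
  have hε0 : (0:ℝ) < ε := by linarith
  have he : (2.7182818283 : ℝ) ≤ Real.exp 1 := Real.exp_one_gt_d9.le
  have hB1 : (1 - ε) / (Real.exp 1 * ε) ≤ 1 := by
    rw [div_le_one (by positivity)]
    nlinarith
  exact Real.rpow_le_one (div_nonneg (by linarith) (by positivity)) hB1 (by norm_num)

/-! ### Main theorem -/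

/-- The `(1-ε)`-quantile of the standard Gaussian is at most the unimodal
safety factor `((1-ε)/(e·ε))^(1/1.95)` for every `ε ∈ (0, 1/2]`. -/
theorem gaussian_quantile_le_unimodal_safety_factor (ε : ℝ)
    (hε : ε ∈ Set.Ioc (0 : ℝ) (1 / 2)) (q : ℝ)
    (hq : gaussianReal 0 1 (Set.Iic q) = ENNReal.ofReal (1 - ε)) :
    q ≤ ((1 - ε) / (Real.exp 1 * ε)) ^ ((1 : ℝ) / 1.95) := by
  obtain ⟨hε0, hε2⟩ := hε
  set R : ℝ := ((1 - ε) / (Real.exp 1 * ε)) ^ ((1 : ℝ) / 1.95) with hRdef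
  have hBpos : (0:ℝ) < (1 - ε) / (Real.exp 1 * ε) := by
    apply div_pos (by linarith) (by positivity)
  have hRpos : (0:ℝ) < R := Real.rpow_pos_of_pos hBpos _
  have hFq : (∫ x in Iic q, stdGaussPhi x) = 1 - ε := by
    have h := hq
    rw [stdGauss_Iic] at h
    rw [ENNReal.ofReal_eq_ofReal_iff (setIntegral_nonneg measurableSet_Iic
      (fun x _ => (stdGaussPhi_pos x).le)) (by linarith)] at h
    exact h
  have hFR : 1 - ε ≤ ∫ x in Iic R, stdGaussPhi x := by
    rcases le_or_gt ε (32/100) with hcase | hcase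
    · have hlogR : Real.log R = (1/1.95) * Real.log ((1 - ε) / (Real.exp 1 * ε)) :=
        Real.log_rpow hBpos _
      have hlogB : Real.log ((1 - ε) / (Real.exp 1 * ε))
          = Real.log (1 - ε) - 1 - Real.log ε := by
        rw [Real.log_div (by linarith) (by positivity),
          Real.log_mul (Real.exp_ne_zero 1) hε0.ne', Real.log_exp]
        ring
      have hlog : Real.log ε = Real.log (1 - ε) - 1 - (39/20) * Real.log R := by
        rw [hlogR, hlogB]; ring_nf
      have hA := stdGauss_regimeA hε0 hcase hRpos hlog
      have htail : (∫ x in Ioi R, stdGaussPhi x) ≤ ε := by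
        refine (stdGauss_tail_le hRpos).trans ?_
        rw [stdGaussPhi_def, div_le_iff₀ hRpos]
        have hsq : (0:ℝ) < Real.sqrt (2*π) := by positivity
        rw [inv_mul_le_iff₀ hsq] at *
        calc Real.exp (-R ^ 2 / 2) = Real.exp (-R^2/2) := by norm_num
          _ ≤ ε * R * Real.sqrt (2*π) := hA
          _ = Real.sqrt (2*π) * (ε * R) := by ring
      have := stdGaussPhi_split R
      linarith
    · have h59 : (59/100:ℝ) ≤ R := stdGauss_R_lower hcase.le hε2
      have h1 : R ≤ 1 := stdGauss_R_upper hcase.le hε2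
      have hB := stdGauss_regimeB h59 h1
      have hmid := stdGauss_mid_ge (by linarith : (0:ℝ) ≤ R)
      have hphiR : (18/100 : ℝ) ≤ R * stdGaussPhi R := by
        rw [stdGaussPhi_def]
        have hsq : (0:ℝ) < Real.sqrt (2*π) := by positivity
        rw [show R * ((Real.sqrt (2 * π))⁻¹ * Real.exp (-R ^ 2 / 2))
          = (R * Real.exp (-R^2/2)) / Real.sqrt (2*π) by rw [div_eq_mul_inv]; ring]
        rw [le_div_iff₀ hsq]
        linarith [hB]
      linarith
  by_contra hcon
  push_neg at hcon
  have hsplit : (∫ x in Iic q, stdGaussPhi x)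
      = (∫ x in Iic R, stdGaussPhi x) + ∫ x in Ioc R q, stdGaussPhi x := by
    rw [← setIntegral_union (Iic_disjoint_Ioc le_rfl) measurableSet_Ioc
      stdGaussPhi_integrable.integrableOn stdGaussPhi_integrable.integrableOn,
      Iic_union_Ioc_eq_Iic hcon.le]
  have hpos : 0 < ∫ x in Ioc R q, stdGaussPhi x := by
    rw [← intervalIntegral.integral_of_le hcon.le]
    exact intervalIntegral.intervalIntegral_pos_of_pos_on
      stdGaussPhi_integrable.intervalIntegrable (fun x _ => stdGaussPhi_pos x) hcon
  linarith
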